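/- Let X be a complex Banach space and Δ : S(c₀(Γ)) → S(X) a surjective isometry between unit spheres. For each n ∈ Γ and λ ∈ 𝕋 (unit circle), let A(n,λ) = {x ∈ S(c₀(Γ)) : x(n) = λ}. Then the set supp(n,λ) = {φ ∈ X* : ‖φ‖ = 1 and φ⁻¹({1}) ∩ S(X) ⊇ Δ(A(n,λ)) with equality φ⁻¹({1}) = Δ(A(n,λ))} is nonempty. -/

import Mathlib

set_option maxHeartbeats 1000000


open ZeroAtInfty Metric

/-- The canonical basis vector `e n` of `c₀(Γ)`. -/
noncomputable def stdBasis {Γ : Type*} [TopologicalSpace Γ] [DiscreteTopology Γ] [DecidableEq Γ]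
    (n : Γ) : C₀(Γ, ℂ) where
  toFun := fun k => if k = n then 1 else 0
  continuous_toFun := continuous_of_discreteTopology
  zero_at_infty' := by
    have h : (fun k => if k = n then (1 : ℂ) else 0) =ᶠ[Filter.cocompact Γ] 0 := by
      refine Filter.mem_cocompact.2 ⟨{n}, isCompact_singleton, ?_⟩
      intro k hk
      simp only [Set.mem_compl_iff, Set.mem_singleton_iff] at hk
      simp [hk]
    exact Filter.Tendsto.congr' h.symm tendsto_const_nhds

namespace SuppAux
set_option linter.unusedSectionVars false

variable {Γ : Type*} [TopologicalSpace Γ] [DiscreteTopology Γ]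

lemma stdBasis_apply [DecidableEq Γ] (n k : Γ) :
    stdBasis n k = if k = n then (1 : ℂ) else 0 := rfl

lemma coord_le_norm (f : C₀(Γ, ℂ)) (k : Γ) : ‖f k‖ ≤ ‖f‖ := by
  rw [← ZeroAtInftyContinuousMap.norm_toBCF_eq_norm]
  exact f.toBCF.norm_coe_le_norm k

lemma norm_le_of (f : C₀(Γ, ℂ)) {C : ℝ} (hC : 0 ≤ C) (h : ∀ k, ‖f k‖ ≤ C) : ‖f‖ ≤ C := by
  rw [← ZeroAtInftyContinuousMap.norm_toBCF_eq_norm]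
  exact (BoundedContinuousFunction.norm_le hC).2 h

lemma exists_attain (f : C₀(Γ, ℂ)) (hf : 0 < ‖f‖) : ∃ k, ‖f k‖ = ‖f‖ := by
  by_contra hcon
  push_neg at hcon
  have hlt : ∀ k, ‖f k‖ < ‖f‖ := fun k => lt_of_le_of_ne (coord_le_norm f k) (hcon k)
  have h2 : {x : Γ | dist (f x) 0 < ‖f‖ / 2} ∈ Filter.cocompact Γ := by
    have := f.zero_at_infty'
    exact Metric.tendsto_nhds.mp this (‖f‖ / 2) (by positivity)
  obtain ⟨K, hKc, hKsub⟩ := Filter.mem_cocompact.mp h2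
  have hKfin : K.Finite := hKc.finite DiscreteTopology.isDiscrete
  have hsmall : ∀ j, j ∉ K → ‖f j‖ ≤ ‖f‖ / 2 := by
    intro j hj
    have := hKsub hj
    simp only [Set.mem_setOf_eq, dist_zero_right] at this
    exact this.le
  by_cases hKe : (hKfin.toFinset).Nonempty
  · obtain ⟨k0, hk0K, hk0max⟩ := Finset.exists_max_image hKfin.toFinset (fun k => ‖f k‖) hKe
    have hub : ∀ j, ‖f j‖ ≤ max ‖f k0‖ (‖f‖ / 2) := by
      intro j
      by_cases hj : j ∈ K
      · exact le_max_of_le_left (hk0max j (hKfin.mem_toFinset.2 hj))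
      · exact le_max_of_le_right (hsmall j hj)
    have h5 := norm_le_of f (le_trans (norm_nonneg _) (hub k0)) hub
    have hmax : max ‖f k0‖ (‖f‖ / 2) < ‖f‖ := max_lt (hlt k0) (by linarith)
    linarith
  · have hub : ∀ j, ‖f j‖ ≤ ‖f‖ / 2 := by
      intro j
      refine hsmall j fun hh => hKe ⟨j, hKfin.mem_toFinset.2 hh⟩
    have := norm_le_of f (by positivity) hub
    linarith

lemma neg_of_dist_two {a b : ℂ} (ha : ‖a‖ ≤ 1) (hb : ‖b‖ ≤ 1) (h : ‖a - b‖ = 2) :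
    b = -a ∧ ‖a‖ = 1 := by
  have htri := norm_sub_le a b
  have hna : ‖a‖ = 1 := by linarith
  have hnb : ‖b‖ = 1 := by linarith
  have hq : Complex.normSq (a + b) + Complex.normSq (a - b) =
      2 * (Complex.normSq a + Complex.normSq b) := by
    simp only [Complex.normSq_apply, Complex.add_re, Complex.add_im, Complex.sub_re,
      Complex.sub_im]
    ring
  have h1 : Complex.normSq a = 1 := by
    rw [← Complex.sq_norm, hna]; norm_num
  have h2 : Complex.normSq b = 1 := by
    rw [← Complex.sq_norm, hnb]; norm_num
  have h3 : Complex.normSq (a - b) = 4 := by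
    rw [← Complex.sq_norm, h]; norm_num
  have h0 : Complex.normSq (a + b) = 0 := by linarith
  have h5 : a + b = 0 := Complex.normSq_eq_zero.mp h0
  exact ⟨by linear_combination h5, hna⟩

lemma eq_one_of_re_one {z : ℂ} (hz : ‖z‖ ≤ 1) (hre : z.re = 1) : z = 1 := by
  have h1 : Complex.normSq z ≤ 1 := by
    rw [← Complex.sq_norm]
    nlinarith [norm_nonneg z]
  have h2 : z.im = 0 := by
    have := Complex.normSq_apply z
    nlinarith [sq_nonneg z.im]
  exact Complex.ext (by simp [hre]) (by simp [h2])

lemma norm_combo {X : Type*} [NormedAddCommGroup X] [NormedSpace ℝ X] {u v : X}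
    (hu : ‖u‖ = 1) (hv : ‖v‖ = 1) (huv : ‖u + v‖ = 2) {θ : ℝ} (h0 : 0 ≤ θ) (h1 : θ ≤ 1) :
    ‖θ • u + (1 - θ) • v‖ = 1 := by
  have hle : ∀ s : ℝ, 0 ≤ s → s ≤ 1 → ‖s • u + (1 - s) • v‖ ≤ 1 := by
    intro s hs0 hs1
    calc ‖s • u + (1 - s) • v‖ ≤ ‖s • u‖ + ‖(1 - s) • v‖ := norm_add_le _ _
    _ = s + (1 - s) := by
      rw [norm_smul, norm_smul, hu, hv, Real.norm_eq_abs, Real.norm_eq_abs,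
        abs_of_nonneg hs0, abs_of_nonneg (by linarith : (0:ℝ) ≤ 1 - s)]; ring
    _ = 1 := by ring
  have key : u + v = (θ • u + (1 - θ) • v) + ((1 - θ) • u + θ • v) := by module
  have h2 : (2:ℝ) ≤ ‖θ • u + (1 - θ) • v‖ + ‖(1 - θ) • u + θ • v‖ := by
    rw [← huv, key]; exact norm_add_le _ _
  have h3 := hle (1 - θ) (by linarith) (by linarith)
  have h4 := hle θ h0 h1
  simp only [sub_sub_cancel] at h3
  linarith

end SuppAux

open SuppAux

/-- The support set of functionals determined by the image of the maximal face
`A(n,λ) = {x ∈ S(c₀(Γ)) : x n = λ}` under a surjective isometry of spheres is nonempty. -/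
theorem supp_nonempty {Γ : Type*} [TopologicalSpace Γ] [DiscreteTopology Γ] [DecidableEq Γ]
    [Infinite Γ]
    {X : Type*} [NormedAddCommGroup X] [NormedSpace ℂ X] [CompleteSpace X]
    (Δ : sphere (0 : C₀(Γ, ℂ)) 1 → sphere (0 : X) 1)
    (hΔiso : Isometry Δ) (hΔsurj : Function.Surjective Δ)
    (n : Γ) (lam : ℂ) (hlam : ‖lam‖ = 1) :
    Set.Nonempty {φ : X →L[ℂ] ℂ | ‖φ‖ = 1 ∧
      {z : X | ‖z‖ = 1 ∧ φ z = 1} =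
        (fun w : sphere (0 : X) 1 => (w : X)) ''
          (Δ '' {x : sphere (0 : C₀(Γ, ℂ)) 1 | (x : C₀(Γ, ℂ)) n = lam})} := by
  classical
  -- the underlying map into X
  set T : sphere (0 : C₀(Γ, ℂ)) 1 → X := fun x => (Δ x : X) with hTdef
  have hT1 : ∀ x, ‖T x‖ = 1 := fun x => mem_sphere_zero_iff_norm.mp (Δ x).2
  have hTd : ∀ x y, ‖T x - T y‖ = ‖(x : C₀(Γ, ℂ)) - (y : C₀(Γ, ℂ))‖ := by
    intro x y
    have h := hΔiso.dist_eq x y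
    rw [Subtype.dist_eq, Subtype.dist_eq, dist_eq_norm, dist_eq_norm] at h
    exact h
  have hTsurj : ∀ w : X, ‖w‖ = 1 → ∃ e, T e = w := by
    intro w hw
    obtain ⟨e, he⟩ := hΔsurj ⟨w, mem_sphere_zero_iff_norm.mpr hw⟩
    exact ⟨e, by simp [hTdef, he]⟩
  have hTinj : ∀ x y, T x = T y → x = y := by
    intro x y hxy
    have h0 : ‖(x : C₀(Γ, ℂ)) - (y : C₀(Γ, ℂ))‖ = 0 := by
      rw [← hTd, hxy, sub_self, norm_zero]
    exact Subtype.ext (by rwa [norm_sub_eq_zero_iff] at h0)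
  -- the "antipodal conjugate" map σ
  have hneg : ∀ x : sphere (0 : C₀(Γ, ℂ)) 1, ∃ y, T y = -(T x) := fun x =>
    hTsurj _ (by rw [norm_neg, hT1])
  choose σ hσ using hneg
  have hσσ : ∀ x, σ (σ x) = x := fun x => hTinj _ _ (by rw [hσ, hσ, neg_neg])
  have hσd : ∀ x y, ‖(σ x : C₀(Γ, ℂ)) - (σ y : C₀(Γ, ℂ))‖ = ‖(x : C₀(Γ, ℂ)) - (y : C₀(Γ, ℂ))‖ := by
    intro x y
    rw [← hTd, hσ, hσ, neg_sub_neg, hTd y x, ← norm_neg, neg_sub]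
  have hσ2 : ∀ x, ‖(σ x : C₀(Γ, ℂ)) - (x : C₀(Γ, ℂ))‖ = 2 := by
    intro x
    rw [← hTd, hσ]
    have h2 : -(T x) - T x = -((2:ℝ) • T x) := by module
    rw [h2, norm_neg, norm_smul, hT1, Real.norm_eq_abs]
    norm_num
  -- coordinate flip property of σ
  have hflip : ∀ (x : sphere (0 : C₀(Γ, ℂ)) 1) (k : Γ), ‖(x : C₀(Γ, ℂ)) k‖ = 1 →
      (σ x : C₀(Γ, ℂ)) k = -((x : C₀(Γ, ℂ)) k) := by
    intro x k hk
    have hxn : ‖(x : C₀(Γ, ℂ))‖ = 1 := mem_sphere_zero_iff_norm.mp x.2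
    have key : ∀ ε : ℝ, 0 < ε → ε ≤ 1 →
        ‖(σ x : C₀(Γ, ℂ)) k + (x : C₀(Γ, ℂ)) k‖ ≤ 2 * ε := by
      intro ε hε0 hε1
      set xc : C₀(Γ, ℂ) := (x : C₀(Γ, ℂ)) with hxc
      set xt : C₀(Γ, ℂ) := (1 - (ε:ℂ)) • xc + (ε:ℂ) • (xc k • stdBasis k) with hxt
      have hxtapp : ∀ j, xt j = (1 - (ε:ℂ)) * xc j + (ε:ℂ) * (xc k * (if j = k then 1 else 0)) := by
        intro j
        simp [hxt, stdBasis_apply, mul_comm]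
      have hxtk : xt k = xc k := by rw [hxtapp k]; simp; ring
      have hxtj : ∀ j, j ≠ k → xt j = (1 - (ε:ℂ)) * xc j := by
        intro j hj; rw [hxtapp j, if_neg hj]; ring
      have hxtnorm : ‖xt‖ = 1 := by
        refine le_antisymm (norm_le_of _ zero_le_one fun j => ?_) ?_
        · by_cases hj : j = k
          · rw [hj, hxtk, hxc]; exact le_of_eq hk
          · rw [hxtj j hj, norm_mul]
            have h1 : ‖(1 : ℂ) - (ε:ℂ)‖ = 1 - ε := by
              rw [show (1:ℂ) - (ε:ℂ) = ((1 - ε : ℝ) : ℂ) by push_cast; ring,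
                Complex.norm_real, Real.norm_eq_abs, abs_of_nonneg (by linarith)]
            rw [h1]
            have h2 : ‖xc j‖ ≤ 1 := by
              have := coord_le_norm xc j; rwa [hxn] at this
            nlinarith
        · have h3 := coord_le_norm xt k
          rw [hxtk, hk] at h3
          exact h3
      set xts : sphere (0 : C₀(Γ, ℂ)) 1 := ⟨xt, mem_sphere_zero_iff_norm.mpr hxtnorm⟩ with hxts
      have hdistx : ‖xc - xt‖ ≤ 2 * ε := by
        have h4 : xc - xt = (ε:ℂ) • (xc - xc k • stdBasis k) := by
          rw [hxt]; module
        rw [h4, norm_smul ((ε:ℂ)) (xc - xc k • stdBasis k), Complex.norm_real,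
          Real.norm_eq_abs, abs_of_pos hε0]
        have h5 : ‖xc - xc k • stdBasis k‖ ≤ 2 := by
          refine le_trans (norm_sub_le _ _) ?_
          have h6 : ‖xc k • stdBasis k‖ ≤ 1 := by
            rw [norm_smul (xc k) (stdBasis (Γ := Γ) k)]
            have h7 : ‖stdBasis (Γ := Γ) k‖ ≤ 1 := by
              refine norm_le_of _ zero_le_one fun j => ?_
              by_cases hj : j = k <;> simp [stdBasis_apply, hj]
            have h8 : ‖xc k‖ ≤ 1 := by
              have := coord_le_norm xc k; rwa [hxn] at this
            nlinarith [norm_nonneg (stdBasis (Γ := Γ) k)]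
          rw [hxn]; linarith
        nlinarith
      -- flip at xt
      have hz : ‖(σ xts : C₀(Γ, ℂ)) - xt‖ = 2 := hσ2 xts
      obtain ⟨j, hj⟩ := exists_attain ((σ xts : C₀(Γ, ℂ)) - xt) (by rw [hz]; norm_num)
      rw [hz] at hj
      rw [ZeroAtInftyContinuousMap.coe_sub, Pi.sub_apply] at hj
      have hσn : ‖(σ xts : C₀(Γ, ℂ))‖ = 1 := mem_sphere_zero_iff_norm.mp (σ xts).2
      have ha1 : ‖(σ xts : C₀(Γ, ℂ)) j‖ ≤ 1 := by
        have := coord_le_norm (σ xts : C₀(Γ, ℂ)) j; rwa [hσn] at this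
      have hb1 : ‖xt j‖ ≤ 1 := by
        have := coord_le_norm xt j; rwa [hxtnorm] at this
      obtain ⟨hbneg, hanorm⟩ := neg_of_dist_two ha1 hb1 hj
      have hjk : j = k := by
        by_contra hjk
        have h9 : ‖xt j‖ = 1 := by rw [hbneg, norm_neg, hanorm]
        rw [hxtj j hjk, norm_mul] at h9
        have h1 : ‖(1 : ℂ) - (ε:ℂ)‖ = 1 - ε := by
          rw [show (1:ℂ) - (ε:ℂ) = ((1 - ε : ℝ) : ℂ) by push_cast; ring,
            Complex.norm_real, Real.norm_eq_abs, abs_of_nonneg (by linarith)]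
        rw [h1] at h9
        have h2 : ‖xc j‖ ≤ 1 := by
          have := coord_le_norm xc j; rwa [hxn] at this
        nlinarith
      -- so (σ xts) k = - xc k
      have hflipxt : (σ xts : C₀(Γ, ℂ)) k = -(xc k) := by
        have h13 := hbneg
        rw [hjk, hxtk] at h13
        rw [h13, neg_neg]
      -- compare σ x with σ xts
      have hcmp : ‖(σ x : C₀(Γ, ℂ)) k - (σ xts : C₀(Γ, ℂ)) k‖ ≤ 2 * ε := by
        have h10 := coord_le_norm ((σ x : C₀(Γ, ℂ)) - (σ xts : C₀(Γ, ℂ))) k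
        rw [ZeroAtInftyContinuousMap.coe_sub, Pi.sub_apply] at h10
        refine le_trans h10 ?_
        rw [hσd x xts]
        exact hdistx
      calc ‖(σ x : C₀(Γ, ℂ)) k + xc k‖
          = ‖(σ x : C₀(Γ, ℂ)) k - (σ xts : C₀(Γ, ℂ)) k‖ := by rw [hflipxt]; ring_nf
        _ ≤ 2 * ε := hcmp
    -- conclude
    have hfin : ‖(σ x : C₀(Γ, ℂ)) k + (x : C₀(Γ, ℂ)) k‖ ≤ 0 := by
      refine le_of_forall_pos_le_add fun ε hε => ?_
      have := key (min (ε/2) 1) (lt_min (by linarith) one_pos) (min_le_right _ _)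
      have h11 : 2 * min (ε/2) 1 ≤ ε := by
        have := min_le_left (ε/2) 1; linarith
      linarith
    have h12 : (σ x : C₀(Γ, ℂ)) k + (x : C₀(Γ, ℂ)) k = 0 :=
      norm_le_zero_iff.mp hfin
    exact eq_neg_of_add_eq_zero_left h12
  -- the distinguished point a₀ = lam • e_n
  set a0 : C₀(Γ, ℂ) := lam • stdBasis n with ha0
  have ha0app : ∀ k, a0 k = lam * (if k = n then 1 else 0) := by
    intro k; simp [ha0, stdBasis_apply]
  have ha0n : a0 n = lam := by rw [ha0app]; simp
  have ha0k : ∀ k, k ≠ n → a0 k = 0 := by intro k hk; rw [ha0app, if_neg hk, mul_zero]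
  have hstd1 : ‖stdBasis (Γ := Γ) n‖ = 1 := by
    refine le_antisymm (norm_le_of _ zero_le_one fun j => ?_) ?_
    · by_cases hj : j = n <;> simp [stdBasis_apply, hj]
    · have h := coord_le_norm (stdBasis (Γ := Γ) n) n
      rw [stdBasis_apply] at h
      simpa using h
  have ha0norm : ‖a0‖ = 1 := by
    rw [ha0, norm_smul lam (stdBasis (Γ := Γ) n), hlam, hstd1, one_mul]
  set a0s : sphere (0 : C₀(Γ, ℂ)) 1 := ⟨a0, mem_sphere_zero_iff_norm.mpr ha0norm⟩ with ha0sdef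
  have ha0coe : ((a0s : C₀(Γ, ℂ))) = a0 := rfl
  have hhn : (σ a0s : C₀(Γ, ℂ)) n = -lam := by
    have h := hflip a0s n (by rw [ha0coe, ha0n, hlam])
    rw [ha0coe, ha0n] at h
    exact h
  have hhk : ∀ k, ‖(σ a0s : C₀(Γ, ℂ)) k‖ = 1 → k = n := by
    intro k hk
    by_contra hkn
    have h14 := hflip (σ a0s) k hk
    rw [hσσ, ha0coe, ha0k k hkn] at h14
    have h15 : (σ a0s : C₀(Γ, ℂ)) k = 0 := by
      have := congrArg Neg.neg h14
      simpa using this.symm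
    rw [h15, norm_zero] at hk
    norm_num at hk
  -- characterization of the face A(n, lam) via distance to σ a0s
  have hL5 : ∀ e : sphere (0 : C₀(Γ, ℂ)) 1,
      ‖(e : C₀(Γ, ℂ)) - (σ a0s : C₀(Γ, ℂ))‖ = 2 ↔ (e : C₀(Γ, ℂ)) n = lam := by
    intro e
    have hen : ‖(e : C₀(Γ, ℂ))‖ = 1 := mem_sphere_zero_iff_norm.mp e.2
    have hhnorm : ‖(σ a0s : C₀(Γ, ℂ))‖ = 1 := mem_sphere_zero_iff_norm.mp (σ a0s).2
    constructor
    · intro h2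
      obtain ⟨j, hj⟩ := exists_attain _ (by rw [h2]; norm_num)
      rw [h2, ZeroAtInftyContinuousMap.coe_sub, Pi.sub_apply] at hj
      have ha1 : ‖(e : C₀(Γ, ℂ)) j‖ ≤ 1 := by
        have := coord_le_norm (e : C₀(Γ, ℂ)) j; rwa [hen] at this
      have hb1 : ‖(σ a0s : C₀(Γ, ℂ)) j‖ ≤ 1 := by
        have := coord_le_norm (σ a0s : C₀(Γ, ℂ)) j; rwa [hhnorm] at this
      obtain ⟨hneg', hnorm'⟩ := neg_of_dist_two ha1 hb1 hj
      have hjn : j = n := hhk j (by rw [hneg', norm_neg, hnorm'])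
      rw [hjn] at hneg'
      rw [hhn] at hneg'
      exact (neg_injective hneg').symm
    · intro hen2
      refine le_antisymm (norm_le_of _ (by norm_num) fun j => ?_) ?_
      · rw [ZeroAtInftyContinuousMap.coe_sub, Pi.sub_apply]
        refine le_trans (norm_sub_le _ _) ?_
        have h1 := coord_le_norm (e : C₀(Γ, ℂ)) j
        have h2 := coord_le_norm (σ a0s : C₀(Γ, ℂ)) j
        rw [hen] at h1; rw [hhnorm] at h2; linarith
      · have h3 := coord_le_norm ((e : C₀(Γ, ℂ)) - (σ a0s : C₀(Γ, ℂ))) n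
        rw [ZeroAtInftyContinuousMap.coe_sub, Pi.sub_apply, hen2, hhn, sub_neg_eq_add] at h3
        have h4 : ‖lam + lam‖ = 2 := by
          rw [show lam + lam = (2:ℂ) * lam by ring, norm_mul, hlam]
          simp
        rw [h4] at h3; exact h3
  -- now move to X
  set d0 : X := T a0s with hd0
  have hTh : T (σ a0s) = -d0 := by rw [hd0]; exact hσ a0s
  set DD : Set X := {y | ‖y‖ = 1 ∧ ‖y + d0‖ = 2} with hDDdef
  have hDDmem : ∀ y : X, y ∈ DD ↔ (‖y‖ = 1 ∧ ‖y + d0‖ = 2) := fun y => Iff.rfl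
  have hmemTD : ∀ e : sphere (0 : C₀(Γ, ℂ)) 1, (T e ∈ DD ↔ (e : C₀(Γ, ℂ)) n = lam) := by
    intro e
    have hrw : ‖T e + d0‖ = ‖(e : C₀(Γ, ℂ)) - (σ a0s : C₀(Γ, ℂ))‖ := by
      rw [← hTd e (σ a0s), hTh, sub_neg_eq_add]
    constructor
    · intro hm
      exact (hL5 e).mp (by rw [← hrw]; exact ((hDDmem _).mp hm).2)
    · intro hm
      exact (hDDmem _).mpr ⟨hT1 e, by rw [hrw]; exact (hL5 e).mpr hm⟩
  have hd0n : ‖d0‖ = 1 := hT1 a0s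
  have hd0mem : d0 ∈ DD := by
    refine (hDDmem _).mpr ⟨hd0n, ?_⟩
    have h : d0 + d0 = (2:ℝ) • d0 := by module
    rw [h, norm_smul (2:ℝ) d0, hd0n, Real.norm_eq_abs]
    norm_num
  have hclique : ∀ y ∈ DD, ∀ z ∈ DD, ‖y + z‖ = 2 := by
    intro y hy z hz
    obtain ⟨e, he⟩ := hTsurj y ((hDDmem _).mp hy).1
    obtain ⟨e', he'⟩ := hTsurj z ((hDDmem _).mp hz).1
    have hen : (e : C₀(Γ, ℂ)) n = lam := (hmemTD e).mp (by rw [he]; exact hy)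
    have hen' : (e' : C₀(Γ, ℂ)) n = lam := (hmemTD e').mp (by rw [he']; exact hz)
    have hσe' : (σ e' : C₀(Γ, ℂ)) n = -lam := by
      have h := hflip e' n (by rw [hen']; exact hlam)
      rw [hen'] at h; exact h
    have h1 : ‖y + z‖ = ‖(e : C₀(Γ, ℂ)) - (σ e' : C₀(Γ, ℂ))‖ := by
      rw [← he, ← he', ← hTd e (σ e'), hσ e', sub_neg_eq_add]
    rw [h1]
    have hen1 : ‖(e : C₀(Γ, ℂ))‖ = 1 := mem_sphere_zero_iff_norm.mp e.2
    have hen1' : ‖(σ e' : C₀(Γ, ℂ))‖ = 1 := mem_sphere_zero_iff_norm.mp (σ e').2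
    refine le_antisymm (norm_le_of _ (by norm_num) fun j => ?_) ?_
    · rw [ZeroAtInftyContinuousMap.coe_sub, Pi.sub_apply]
      refine le_trans (norm_sub_le _ _) ?_
      have h2 := coord_le_norm (e : C₀(Γ, ℂ)) j
      have h3 := coord_le_norm (σ e' : C₀(Γ, ℂ)) j
      rw [hen1] at h2; rw [hen1'] at h3; linarith
    · have h3 := coord_le_norm ((e : C₀(Γ, ℂ)) - (σ e' : C₀(Γ, ℂ))) n
      rw [ZeroAtInftyContinuousMap.coe_sub, Pi.sub_apply, hen, hσe', sub_neg_eq_add] at h3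
      have h4 : ‖lam + lam‖ = 2 := by
        rw [show lam + lam = (2:ℂ) * lam by ring, norm_mul, hlam]
        simp
      rw [h4] at h3; exact h3
  have hseg : ∀ y ∈ DD, ∀ t : ℝ, 0 ≤ t → t ≤ 1 → t • y + (1 - t) • d0 ∈ DD := by
    intro y hy t ht0 ht1
    obtain ⟨hy1, hy2⟩ := (hDDmem _).mp hy
    have hn1 : ‖t • y + (1 - t) • d0‖ = 1 := norm_combo hy1 hd0n hy2 ht0 ht1
    refine (hDDmem _).mpr ⟨hn1, ?_⟩
    have hyd : y + d0 ≠ 0 := by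
      intro h0
      rw [h0, norm_zero] at hy2; norm_num at hy2
    obtain ⟨ψ, hψ1, hψv⟩ := exists_dual_vector ℂ (y + d0) (norm_ne_zero_iff.mpr hyd)
    rw [hy2] at hψv
    have hψsum : (ψ y).re + (ψ d0).re = 2 := by
      have h := congrArg Complex.re hψv
      rw [map_add] at h
      simpa using h
    have hby : (ψ y).re ≤ 1 := by
      refine le_trans (Complex.re_le_norm _) (le_of_eq_of_le rfl ?_)
      calc ‖ψ y‖ ≤ ‖ψ‖ * ‖y‖ := ψ.le_opNorm y
      _ = 1 := by rw [hψ1, hy1, one_mul]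
    have hbd : (ψ d0).re ≤ 1 := by
      refine le_trans (Complex.re_le_norm _) (le_of_eq_of_le rfl ?_)
      calc ‖ψ d0‖ ≤ ‖ψ‖ * ‖d0‖ := ψ.le_opNorm d0
      _ = 1 := by rw [hψ1, hd0n, one_mul]
    have hry : (ψ y).re = 1 := by linarith
    have hrd : (ψ d0).re = 1 := by linarith
    refine le_antisymm ?_ ?_
    · calc ‖t • y + (1 - t) • d0 + d0‖ ≤ ‖t • y + (1 - t) • d0‖ + ‖d0‖ := norm_add_le _ _
      _ = 2 := by rw [hn1, hd0n]; norm_num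
    · have h5 : (ψ (t • y + (1 - t) • d0 + d0)).re = 2 := by
        rw [map_add, map_add, ψ.map_smul_of_tower, ψ.map_smul_of_tower]
        simp only [Complex.add_re, Complex.real_smul, Complex.mul_re, Complex.ofReal_re,
          Complex.ofReal_im]
        rw [hry, hrd]; ring
      calc (2:ℝ) = (ψ (t • y + (1 - t) • d0 + d0)).re := h5.symm
      _ ≤ ‖ψ (t • y + (1 - t) • d0 + d0)‖ := Complex.re_le_norm _
      _ = ‖ψ (t • y + (1 - t) • d0 + d0)‖ := rfl
      _ ≤ ‖ψ‖ * ‖t • y + (1 - t) • d0 + d0‖ := ψ.le_opNorm _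
      _ = ‖t • y + (1 - t) • d0 + d0‖ := by rw [hψ1, one_mul]
  have hcomb : ∀ u ∈ DD, ∀ v ∈ DD, ∀ θ : ℝ, 0 ≤ θ → θ ≤ 1 → θ • u + (1 - θ) • v ∈ DD := by
    intro u hu v hv θ h0 h1
    have hn1 : ‖θ • u + (1 - θ) • v‖ = 1 :=
      norm_combo ((hDDmem _).mp hu).1 ((hDDmem _).mp hv).1 (hclique u hu v hv) h0 h1
    have hz := hseg u hu θ h0 h1
    have hw := hseg v hv (1 - θ) (by linarith) (by linarith)
    rw [sub_sub_cancel] at hw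
    have hzw : (θ • u + (1 - θ) • d0) + ((1 - θ) • v + θ • d0) = (θ • u + (1 - θ) • v) + d0 := by
      module
    have h2 := hclique _ hz _ hw
    rw [hzw] at h2
    exact (hDDmem _).mpr ⟨hn1, h2⟩
  have hDDconv : Convex ℝ DD := by
    intro u hu v hv a b ha hb hab
    have h := hcomb u hu v hv a ha (by linarith)
    rwa [show (1 - a) = b by linarith] at h
  have hdisj : Disjoint (ball (0:X) 1) DD := by
    rw [Set.disjoint_left]
    intro y hyb hyD
    rw [mem_ball, dist_zero_right] at hyb
    have := ((hDDmem _).mp hyD).1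
    linarith
  obtain ⟨f, c, hfb, hfD⟩ :=
    geometric_hahn_banach_open (convex_ball (0:X) 1) isOpen_ball hDDconv hdisj
  have hc : 0 < c := by
    have h0 := hfb 0 (mem_ball_self one_pos)
    simpa using h0
  have hfnorm : ‖f‖ ≤ c := by
    refine f.opNorm_le_bound hc.le fun x => ?_
    rcases eq_or_ne x 0 with rfl | hx
    · simp
    · by_contra hcon
      push_neg at hcon
      have hxpos : 0 < ‖x‖ := norm_pos_iff.mpr hx
      have hfxpos : 0 < ‖f x‖ := lt_of_le_of_lt (by positivity) hcon
      set r : ℝ := (c * ‖x‖ / ‖f x‖ + 1) / 2 with hr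
      have hq : c * ‖x‖ / ‖f x‖ < 1 := (div_lt_one hfxpos).mpr hcon
      have hq0 : 0 ≤ c * ‖x‖ / ‖f x‖ := by positivity
      have hr1 : r < 1 := by rw [hr]; linarith
      have hr0 : 0 < r := by rw [hr]; linarith
      have hrgt : c * ‖x‖ < r * ‖f x‖ := by
        have h6 : c * ‖x‖ / ‖f x‖ < r := by rw [hr]; linarith
        calc c * ‖x‖ = (c * ‖x‖ / ‖f x‖) * ‖f x‖ := (div_mul_cancel₀ _ hfxpos.ne').symm
        _ < r * ‖f x‖ := mul_lt_mul_of_pos_right h6 hfxpos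
      set u : X := (r / ‖x‖) • x with hu
      have hun : ‖u‖ = r := by
        rw [hu, norm_smul, Real.norm_eq_abs, abs_of_pos (by positivity)]
        field_simp
      have hub : u ∈ ball (0:X) 1 := by rw [mem_ball, dist_zero_right, hun]; exact hr1
      have hub' : -u ∈ ball (0:X) 1 := by
        rw [mem_ball, dist_zero_right, norm_neg, hun]; exact hr1
      have hfu := hfb u hub
      have hfu' := hfb (-u) hub'
      rw [map_neg] at hfu'
      have habs : |f u| < c := abs_lt.mpr ⟨by linarith, hfu⟩
      rw [hu, map_smul, smul_eq_mul, abs_mul,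
        abs_of_pos (by positivity : (0:ℝ) < r / ‖x‖)] at habs
      have heq2 : r * |f x| = ((r / ‖x‖) * |f x|) * ‖x‖ := by
        field_simp
      have hlast : r * ‖f x‖ < c * ‖x‖ := by
        rw [Real.norm_eq_abs, heq2]
        exact mul_lt_mul_of_pos_right habs hxpos
      linarith
  have hfd : ∀ d ∈ DD, f d = c := by
    intro d hd
    refine le_antisymm ?_ (hfD d hd)
    calc f d ≤ |f d| := le_abs_self _
    _ = ‖f d‖ := (Real.norm_eq_abs _).symm
    _ ≤ ‖f‖ * ‖d‖ := f.le_opNorm d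
    _ = ‖f‖ := by rw [((hDDmem _).mp hd).1, mul_one]
    _ ≤ c := hfnorm
  set g : X →L[ℝ] ℝ := c⁻¹ • f with hg
  have hgd : ∀ d ∈ DD, g d = 1 := by
    intro d hd
    rw [hg, ContinuousLinearMap.smul_apply, smul_eq_mul, hfd d hd]
    exact inv_mul_cancel₀ hc.ne'
  have hgnorm : ‖g‖ ≤ 1 := by
    rw [hg, norm_smul c⁻¹ f, Real.norm_eq_abs, abs_of_pos (inv_pos.mpr hc)]
    calc c⁻¹ * ‖f‖ ≤ c⁻¹ * c := mul_le_mul_of_nonneg_left hfnorm (inv_pos.mpr hc).le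
    _ = 1 := inv_mul_cancel₀ hc.ne'
  set φ : X →L[ℂ] ℂ := StrongDual.extendRCLike g with hφdef
  have hφre : ∀ x : X, (φ x).re = g x := by
    intro x
    have h := StrongDual.re_extendRCLike_apply (𝕜 := ℂ) g x
    simpa only [RCLike.re_to_complex] using h
  have hφnle : ‖φ‖ ≤ 1 := by
    rw [hφdef, ContinuousLinearMap.norm_extendTo𝕜']
    exact hgnorm
  have hφD : ∀ d ∈ DD, φ d = 1 := by
    intro d hd
    refine eq_one_of_re_one ?_ (by rw [hφre]; exact hgd d hd)
    calc ‖φ d‖ ≤ ‖φ‖ * ‖d‖ := φ.le_opNorm d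
    _ ≤ 1 := by rw [((hDDmem _).mp hd).1, mul_one]; exact hφnle
  have hφnorm : ‖φ‖ = 1 := by
    refine le_antisymm hφnle ?_
    have h1 : φ d0 = 1 := hφD d0 hd0mem
    have h2 : ‖φ d0‖ ≤ ‖φ‖ * ‖d0‖ := φ.le_opNorm d0
    rw [h1, hd0n, mul_one] at h2
    simpa using h2
  have hface : {z : X | ‖z‖ = 1 ∧ φ z = 1} = DD := by
    ext z
    simp only [Set.mem_setOf_eq]
    constructor
    · rintro ⟨hz1, hz2⟩
      refine (hDDmem _).mpr ⟨hz1, le_antisymm ?_ ?_⟩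
      · calc ‖z + d0‖ ≤ ‖z‖ + ‖d0‖ := norm_add_le _ _
        _ = 2 := by rw [hz1, hd0n]; norm_num
      · have h3 : (φ (z + d0)).re = 2 := by
          rw [map_add, hz2, hφD d0 hd0mem]; norm_num
        calc (2:ℝ) = (φ (z + d0)).re := h3.symm
        _ ≤ ‖φ (z + d0)‖ := Complex.re_le_norm _
        _ = ‖φ (z + d0)‖ := rfl
        _ ≤ ‖φ‖ * ‖z + d0‖ := φ.le_opNorm _
        _ = ‖z + d0‖ := by rw [hφnorm, one_mul]
    · intro hz
      exact ⟨((hDDmem _).mp hz).1, hφD z hz⟩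
  have himg : DD = (fun w : sphere (0 : X) 1 => (w : X)) ''
      (Δ '' {x : sphere (0 : C₀(Γ, ℂ)) 1 | (x : C₀(Γ, ℂ)) n = lam}) := by
    ext y
    constructor
    · intro hy
      obtain ⟨e, he⟩ := hTsurj y ((hDDmem _).mp hy).1
      have hen : (e : C₀(Γ, ℂ)) n = lam := (hmemTD e).mp (by rw [he]; exact hy)
      exact ⟨Δ e, ⟨e, hen, rfl⟩, he⟩
    · rintro ⟨w, ⟨x, hx, rfl⟩, rfl⟩
      exact (hmemTD x).mpr hx
  exact ⟨φ, hφnorm, by rw [hface, himg]⟩
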